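/- Let E be an elliptic curve, let x, y ∈ k(E) \ k with divisors of zeros/poles of degrees a and b respectively, suppose the divisors (x) and (y) have disjoint supports, and let D be a divisor with deg D > a + b. Then x·|D| + y·|D| = |D + (x)_∞ + (y)_∞|, where (x)_∞ denotes the polar divisor of x and |D| = H^0(E, O(D)) ⊆ k(E). -/

import Mathlib

/- STATEMENT 8:
Let `E` be an elliptic curve, let `x, y ∈ k(E) \ k` with `deg (x)_0 = deg (x)_∞ = a` and
`deg (y)_0 = deg (y)_∞ = b`, suppose the principal divisors `(x)` and `(y)` have disjoint
supports, and let `D` be a divisor with `deg D > a + b`. Then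
`x·|D| + y·|D| = |D + (x)_∞ + (y)_∞|` inside `k(E)`.

The elliptic curve is encoded via its function field `K/k`, with divisors finitely supported
`ℤ`-valued functions on the points `Pt`, spaces `sec D = |D| ⊆ K`, Riemann–Roch for genus one,
`|D| ⊓ |D'| = |inf{D,D'}|`, the principal divisor map `div`, and `f·|D| = |D - (f)|`. -/

def degD {Pt : Type} (D : Pt →₀ ℤ) : ℤ := D.sum fun _ n => n

section helper
variable {Pt : Type}

lemma degD_eq (D : Pt →₀ ℤ) :
    degD D = Finsupp.liftAddHom (α := Pt) (M := ℤ) (N := ℤ) (fun _ => AddMonoidHom.id ℤ) D := by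
  rfl

lemma degD_add (A B : Pt →₀ ℤ) : degD (A + B) = degD A + degD B := by
  rw [degD_eq, degD_eq, degD_eq, map_add]

lemma degD_sub (A B : Pt →₀ ℤ) : degD (A - B) = degD A - degD B := by
  rw [degD_eq, degD_eq, degD_eq, map_sub]

lemma degD_nonneg {A : Pt →₀ ℤ} (h : 0 ≤ A) : 0 ≤ degD A := by
  apply Finset.sum_nonneg
  intro p _
  exact h p

end helper

theorem stmt_8 (k K : Type) [Field k] [IsAlgClosed k] [Field K] [Algebra k K]
    (Pt : Type)
    (sec : (Pt →₀ ℤ) → Submodule k K)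
    (secFD : ∀ D, FiniteDimensional k (sec D))
    (hRR : ∀ D : Pt →₀ ℤ, 0 < degD D → (Module.finrank k (sec D) : ℤ) = degD D)
    (hinf : ∀ D D' : Pt →₀ ℤ, sec (D ⊓ D') = sec D ⊓ sec D')
    (div : Kˣ → (Pt →₀ ℤ))
    (hdivdeg : ∀ f : Kˣ, degD (div f) = 0)
    -- `f·|D| = |D - (f)|` :
    (hsmul : ∀ (f : Kˣ) (D : Pt →₀ ℤ),
      Submodule.map (LinearMap.mulLeft k (f : K)) (sec D) = sec (D - div f))
    (x y : Kˣ)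
    (hx : (x : K) ∉ Set.range (algebraMap k K))
    (hy : (y : K) ∉ Set.range (algebraMap k K))
    (hdisj : Disjoint (div x).support (div y).support)
    (D : Pt →₀ ℤ)
    (hD : degD ((div x)⁺) + degD ((div y)⁺) < degD D) :
    Submodule.map (LinearMap.mulLeft k (x : K)) (sec D) ⊔
      Submodule.map (LinearMap.mulLeft k (y : K)) (sec D) =
    sec (D + (div x)⁻ + (div y)⁻) := by
  have hmono : ∀ A B : Pt →₀ ℤ, A ≤ B → sec A ≤ sec B := by
    intro A B hAB
    have h1 : A ⊓ B = A := inf_eq_left.mpr hAB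
    calc sec A = sec (A ⊓ B) := by rw [h1]
    _ = sec A ⊓ sec B := hinf A B
    _ ≤ sec B := inf_le_right
  have hzero : ∀ p : Pt, div x p = 0 ∨ div y p = 0 := by
    intro p
    by_cases h : div x p = 0
    · exact Or.inl h
    · refine Or.inr ?_
      by_contra h'
      exact (Finset.disjoint_left.mp hdisj (Finsupp.mem_support_iff.mpr h))
        (Finsupp.mem_support_iff.mpr h')
  -- pointwise facts
  have hsup : (D - div x) ⊔ (D - div y) = D + (div x)⁻ + (div y)⁻ := by
    ext p
    have := hzero p
    simp only [Finsupp.sup_apply, Finsupp.add_apply, Finsupp.sub_apply]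
    have hnx : ((div x)⁻) p = max (-(div x p)) 0 := rfl
    have hny : ((div y)⁻) p = max (-(div y p)) 0 := rfl
    rw [hnx, hny]
    omega
  have hinfD : (D - div x) ⊓ (D - div y) = D - (div x)⁺ - (div y)⁺ := by
    ext p
    have := hzero p
    simp only [Finsupp.inf_apply, Finsupp.sub_apply]
    have hnx : ((div x)⁺) p = max (div x p) 0 := rfl
    have hny : ((div y)⁺) p = max (div y p) 0 := rfl
    rw [hnx, hny]
    omega
  -- degrees
  set a := degD ((div x)⁺) with ha
  set b := degD ((div y)⁺) with hb
  have hax : degD ((div x)⁻) = a := by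
    have := hdivdeg x
    have h1 : (div x)⁺ - (div x)⁻ = div x := posPart_sub_negPart _
    have := degD_sub ((div x)⁺) ((div x)⁻)
    rw [h1, hdivdeg x] at this
    omega
  have hby : degD ((div y)⁻) = b := by
    have h1 : (div y)⁺ - (div y)⁻ = div y := posPart_sub_negPart _
    have := degD_sub ((div y)⁺) ((div y)⁻)
    rw [h1, hdivdeg y] at this
    omega
  have ha0 : 0 ≤ a := degD_nonneg (posPart_nonneg _)
  have hb0 : 0 ≤ b := degD_nonneg (posPart_nonneg _)
  have hdegDpos : 0 < degD D := by omega
  have hdegA : degD (D - div x) = degD D := by rw [degD_sub, hdivdeg]; ring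
  have hdegB : degD (D - div y) = degD D := by rw [degD_sub, hdivdeg]; ring
  have hdegInf : degD ((D - div x) ⊓ (D - div y)) = degD D - a - b := by
    rw [hinfD, degD_sub, degD_sub, ← ha, ← hb]
  have hdegSup : degD ((D + (div x)⁻ + (div y)⁻)) = degD D + a + b := by
    rw [degD_add, degD_add, hax, hby]
  -- rewrite the goal using hsmul
  rw [hsmul x D, hsmul y D]
  set A := D - div x
  set B := D - div y
  have hle : sec A ⊔ sec B ≤ sec (D + (div x)⁻ + (div y)⁻) := by
    rw [← hsup]
    exact sup_le (hmono _ _ le_sup_left) (hmono _ _ le_sup_right)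
  haveI := secFD A
  haveI := secFD B
  haveI := secFD (D + (div x)⁻ + (div y)⁻)
  have hrank : Module.finrank k ↥(sec A ⊔ sec B) =
      Module.finrank k ↥(sec (D + (div x)⁻ + (div y)⁻)) := by
    have hsum := Submodule.finrank_sup_add_finrank_inf_eq (sec A) (sec B)
    have hAB : sec A ⊓ sec B = sec (A ⊓ B) := (hinf A B).symm
    have h1 : (Module.finrank k ↥(sec A) : ℤ) = degD D := by rw [hRR A (by omega), hdegA]
    have h2 : (Module.finrank k ↥(sec B) : ℤ) = degD D := by rw [hRR B (by omega), hdegB]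
    have h3 : (Module.finrank k ↥(sec A ⊓ sec B) : ℤ) = degD D - a - b := by
      rw [hAB, hRR (A ⊓ B) (by omega), hdegInf]
    have h4 : (Module.finrank k ↥(sec (D + (div x)⁻ + (div y)⁻)) : ℤ) = degD D + a + b := by
      rw [hRR _ (by omega), hdegSup]
    have hsum' : (Module.finrank k ↥(sec A ⊔ sec B) : ℤ) +
        (Module.finrank k ↥(sec A ⊓ sec B) : ℤ) =
        (Module.finrank k ↥(sec A) : ℤ) + (Module.finrank k ↥(sec B) : ℤ) := by
      exact_mod_cast congrArg (Nat.cast : ℕ → ℤ) hsum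
    have : (Module.finrank k ↥(sec A ⊔ sec B) : ℤ) =
        (Module.finrank k ↥(sec (D + (div x)⁻ + (div y)⁻)) : ℤ) := by omega
    exact_mod_cast this
  exact Submodule.eq_of_le_of_finrank_eq hle hrank
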